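/- Let C be a category of fibrant objects (with weak equivalences W satisfying 2-out-of-3 and fibrations stable under pullback, trivial fibrations stable under pullback, path objects exist). Then every morphism f : X → Y in C factors as f = p ∘ i where p is a fibration and i is a weak equivalence admitting a retraction which is a trivial fibration. -/

import Mathlib

open CategoryTheory CategoryTheory.Limits

universe u v

attribute [local simp] prod.lift_fst prod.lift_snd prod.lift_fst_assoc prod.lift_snd_assoc pullback.lift_fst pullback.lift_snd pullback.lift_fst_assoc pullback.lift_snd_assoc

/-- Brown's factorization lemma.  In a category of fibrant objects
(weak equivalences `W` satisfying 2-out-of-3 and containing isomorphisms, fibrations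
`Fib` containing isomorphisms and closed under composition, pullbacks of fibrations
exist and (trivial) fibrations are stable under pullback, and every object has a path
object), every morphism `f : X → Y` factors as a weak equivalence `i` followed by a
fibration `p`, where moreover `i` admits a retraction which is a trivial fibration. -/
theorem brown_factorization
    (C : Type u) [Category.{v} C] [HasTerminal C] [HasBinaryProducts C]
    (W Fib : MorphismProperty C)
    (hWiso : ∀ {A B : C} (f : A ⟶ B), IsIso f → W f)
    (hW2of3a : ∀ {A B D : C} (f : A ⟶ B) (g : B ⟶ D), W f → W g → W (f ≫ g))
    (hW2of3b : ∀ {A B D : C} (f : A ⟶ B) (g : B ⟶ D), W f → W (f ≫ g) → W g)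
    (hW2of3c : ∀ {A B D : C} (f : A ⟶ B) (g : B ⟶ D), W g → W (f ≫ g) → W f)
    (hFibIso : ∀ {A B : C} (f : A ⟶ B), IsIso f → Fib f)
    (hFibComp : ∀ {A B D : C} (f : A ⟶ B) (g : B ⟶ D), Fib f → Fib g → Fib (f ≫ g))
    (hFibAll : ∀ X : C, Fib (terminal.from X))
    (hpbex : ∀ {A B D : C} (f : A ⟶ D) (g : B ⟶ D), Fib g → HasPullback f g)
    (hFibpb : ∀ {A B D : C} (f : A ⟶ D) (g : B ⟶ D), Fib g →
      ∀ [HasPullback f g], Fib (pullback.fst f g))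
    (hTrivFibpb : ∀ {A B D : C} (f : A ⟶ D) (g : B ⟶ D), Fib g → W g →
      ∀ [HasPullback f g], Fib (pullback.fst f g) ∧ W (pullback.fst f g))
    (hpath : ∀ X : C, ∃ (PX : C) (s : X ⟶ PX) (t : PX ⟶ X ⨯ X),
      s ≫ t = prod.lift (𝟙 X) (𝟙 X) ∧ W s ∧ Fib t) :
    ∀ {X Y : C} (f : X ⟶ Y), ∃ (E : C) (i : X ⟶ E) (p : E ⟶ Y) (r : E ⟶ X),
      i ≫ p = f ∧ W i ∧ Fib p ∧ i ≫ r = 𝟙 X ∧ Fib r ∧ W r := by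
  -- First: projections from binary products are fibrations.
  have hFibFst : ∀ (A B : C), Fib (prod.fst : A ⨯ B ⟶ A) := by
    intro A B
    have hpb : HasPullback (terminal.from A) (terminal.from B) :=
      hpbex _ _ (hFibAll B)
    set P := pullback (terminal.from A) (terminal.from B)
    -- iso A ⨯ B ≅ P
    have hcomm : prod.fst ≫ terminal.from A = prod.snd ≫ terminal.from B := by
      apply terminal.hom_ext
    let a : A ⨯ B ⟶ P := pullback.lift prod.fst prod.snd hcomm
    let b : P ⟶ A ⨯ B := prod.lift (pullback.fst _ _) (pullback.snd _ _)
    have hab : a ≫ b = 𝟙 _ := by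
      apply Limits.prod.hom_ext <;> simp [a, b]
    have hba : b ≫ a = 𝟙 _ := by
      apply pullback.hom_ext <;> simp [a, b]
    have : IsIso a := ⟨b, hab, hba⟩
    have hfst : (prod.fst : A ⨯ B ⟶ A) = a ≫ pullback.fst _ _ := by simp [a]
    rw [hfst]
    exact hFibComp _ _ (hFibIso a this) (hFibpb _ _ (hFibAll B))
  have hFibSnd : ∀ (A B : C), Fib (prod.snd : A ⨯ B ⟶ B) := by
    intro A B
    have : (prod.snd : A ⨯ B ⟶ B) = (prod.braiding A B).hom ≫ prod.fst := by simp
    rw [this]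
    exact hFibComp _ _ (hFibIso _ inferInstance) (hFibFst B A)
  intro X Y f
  obtain ⟨PY, s, t, hst, hWs, hFibt⟩ := hpath Y
  set t1 : PY ⟶ Y := t ≫ prod.fst with ht1
  set t2 : PY ⟶ Y := t ≫ prod.snd with ht2
  have hst1 : s ≫ t1 = 𝟙 Y := by rw [ht1, ← Category.assoc, hst]; simp
  have hst2 : s ≫ t2 = 𝟙 Y := by rw [ht2, ← Category.assoc, hst]; simp
  have hFibt1 : Fib t1 := hFibComp _ _ hFibt (hFibFst Y Y)
  have hWt1 : W t1 := hW2of3b s t1 hWs (hst1 ▸ hWiso _ inferInstance)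
  have hpbE : HasPullback f t1 := hpbex f t1 hFibt1
  refine ⟨pullback f t1,
    pullback.lift (𝟙 X) (f ≫ s) (by simp [hst1]),
    pullback.snd f t1 ≫ t2,
    pullback.fst f t1, ?_, ?_, ?_, ?_, ?_, ?_⟩
  · -- i ≫ p = f
    rw [← Category.assoc]
    simp [hst2]
  · -- W i
    have hWr : W (pullback.fst f t1) := (hTrivFibpb f t1 hFibt1 hWt1).2
    refine hW2of3c _ (pullback.fst f t1) hWr ?_
    simpa using hWiso (𝟙 X) inferInstance
  · -- Fib p
    have hpbQ : HasPullback (prod.map f (𝟙 Y)) t := hpbex _ t hFibt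
    set Q := pullback (prod.map f (𝟙 Y)) t
    have hφc : prod.lift (pullback.fst f t1) (pullback.snd f t1 ≫ t2) ≫
        prod.map f (𝟙 Y) = pullback.snd f t1 ≫ t := by
      apply Limits.prod.hom_ext
      · simpa [ht1] using pullback.condition (f := f) (g := t1)
      · simp [ht2]
    let φ : pullback f t1 ⟶ Q :=
      pullback.lift (prod.lift (pullback.fst f t1) (pullback.snd f t1 ≫ t2))
        (pullback.snd f t1) hφc
    have hψc : (pullback.fst (prod.map f (𝟙 Y)) t ≫ prod.fst) ≫ f =
        pullback.snd (prod.map f (𝟙 Y)) t ≫ t1 := by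
      have := pullback.condition (f := prod.map f (𝟙 Y)) (g := t)
      rw [ht1, ← Category.assoc, ← this]
      simp
    let ψ : Q ⟶ pullback f t1 :=
      pullback.lift (pullback.fst _ _ ≫ prod.fst) (pullback.snd _ _) hψc
    have hφψ : φ ≫ ψ = 𝟙 _ := by
      apply pullback.hom_ext <;> simp [φ, ψ]
    have hψφ : ψ ≫ φ = 𝟙 _ := by
      apply pullback.hom_ext
      · apply Limits.prod.hom_ext
        · simp [φ, ψ]
        · have := pullback.condition (f := prod.map f (𝟙 Y)) (g := t)
          simp [φ, ψ, ht2]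
          rw [← Category.assoc, ← this]
          simp
      · simp [φ, ψ]
    have hiso : IsIso φ := ⟨ψ, hφψ, hψφ⟩
    have hp : pullback.snd f t1 ≫ t2 = φ ≫ pullback.fst _ _ ≫ prod.snd := by
      simp [φ]
    rw [hp]
    exact hFibComp _ _ (hFibIso φ hiso)
      (hFibComp _ _ (hFibpb _ _ hFibt) (hFibSnd X Y))
  · simp
  · exact (hTrivFibpb f t1 hFibt1 hWt1).1
  · exact (hTrivFibpb f t1 hFibt1 hWt1).2
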